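/- Let α and β be positive probability measures on Σ and s, t ∈ [0,∞). If d : Σ* → [0,∞) is an s-α-gale, then the function d̃ defined by d̃(w) = (α(w)^s / β(w)^t) · d(w) is a t-β-gale, where α(w) and β(w) denote the product of the measures of the symbols of w. -/

import Mathlib

/-- Observation 2.1: if `d` is an `s`-`α`-gale then
`d̃(w) = (α(w)^s / β(w)^t) · d(w)` is a `t`-`β`-gale, where `α(w)` denotes
the product of the symbol probabilities of `w`. -/
theorem gale_change_of_measure
    (k : ℕ) (hk : 2 ≤ k)
    (α β : Fin k → ℝ) (hαpos : ∀ a, 0 < α a) (hβpos : ∀ a, 0 < β a)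
    (hα1 : ∑ a, α a = 1) (hβ1 : ∑ a, β a = 1)
    (s t : ℝ) (hs : 0 ≤ s) (ht : 0 ≤ t)
    (d : List (Fin k) → ℝ) (hd0 : ∀ w, 0 ≤ d w)
    (hgale : ∀ w, d w = ∑ a, d (w ++ [a]) * (α a) ^ s) :
    (∀ w, 0 ≤ ((w.map α).prod ^ s / (w.map β).prod ^ t) * d w) ∧
    (∀ w, ((w.map α).prod ^ s / (w.map β).prod ^ t) * d w =
      ∑ a, (((w ++ [a]).map α).prod ^ s / ((w ++ [a]).map β).prod ^ t) *
            d (w ++ [a]) * (β a) ^ t) := by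
  have hαw : ∀ w : List (Fin k), 0 < (w.map α).prod := by
    intro w
    exact List.prod_pos (by simp only [List.mem_map]; rintro x ⟨a, _, rfl⟩; exact hαpos a)
  have hβw : ∀ w : List (Fin k), 0 < (w.map β).prod := by
    intro w
    exact List.prod_pos (by simp only [List.mem_map]; rintro x ⟨a, _, rfl⟩; exact hβpos a)
  constructor
  · intro w
    exact mul_nonneg (div_nonneg (Real.rpow_nonneg (hαw w).le s)
      (Real.rpow_nonneg (hβw w).le t)) (hd0 w)
  · intro w
    have key : ∀ a : Fin k,
        (((w ++ [a]).map α).prod ^ s / ((w ++ [a]).map β).prod ^ t) *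
          d (w ++ [a]) * (β a) ^ t
        = ((w.map α).prod ^ s / (w.map β).prod ^ t) *
            (d (w ++ [a]) * (α a) ^ s) := by
      intro a
      have hαa := (hαpos a).le
      have hβa := (hβpos a).le
      rw [List.map_append, List.map_append, List.prod_append, List.prod_append]
      simp only [List.map_cons, List.map_nil, List.prod_cons, List.prod_nil, mul_one]
      rw [Real.mul_rpow (hαw w).le hαa, Real.mul_rpow (hβw w).le hβa]
      have hβt : (β a : ℝ) ^ t ≠ 0 := (Real.rpow_pos_of_pos (hβpos a) t).ne'
      field_simp
    calc ((w.map α).prod ^ s / (w.map β).prod ^ t) * d w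
        = ((w.map α).prod ^ s / (w.map β).prod ^ t) *
            ∑ a, d (w ++ [a]) * (α a) ^ s := by rw [← hgale w]
      _ = ∑ a, ((w.map α).prod ^ s / (w.map β).prod ^ t) *
            (d (w ++ [a]) * (α a) ^ s) := by rw [Finset.mul_sum]
      _ = _ := by simp_rw [key]
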